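/- Let r ∈ ℚ_{>1} \ ℕ (so n(r) > d(r) > 1 and S_r is atomic). Then for every k ∈ ℕ: (i) if k < d(r), then U_k(S_r) = {k}; (ii) if d(r) ≤ k < n(r), then U_k(S_r) = { k + j·(n(r) − d(r)) : j ∈ ℕ₀ }; (iii) if k ≥ n(r), then there exists a negative integer ℓ such that U_k(S_r) = { k + j·(n(r) − d(r)) : j ∈ ℤ, j ≥ ℓ }. -/

import Mathlib

open Finsupp
open scoped ENNReal

/-- The Puiseux monoid (rational cyclic semiring) `S_r`, the additive submonoid of `ℚ`
generated by the nonnegative powers of `r`. -/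
def S (r : ℚ) : AddSubmonoid ℚ := AddSubmonoid.closure {x : ℚ | ∃ n : ℕ, x = r ^ n}

/-- A factorization of `x` over the powers of `r`: a finitely supported choice of
coefficients `α i` with `∑ α i * r ^ i = x`. -/
def IsFactorization (r x : ℚ) (α : ℕ →₀ ℕ) : Prop :=
  (α.sum fun i c => (c : ℚ) * r ^ i) = x

/-- The length of a factorization. -/
def flen (α : ℕ →₀ ℕ) : ℕ := α.sum fun _ c => c

/-- The set of lengths of factorizations of `x` over the powers of `r`. -/
def lengthSet (r x : ℚ) : Set ℕ :=
  {t | ∃ α : ℕ →₀ ℕ, IsFactorization r x α ∧ flen α = t}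

/-- An atom of `S_r`: a nonzero element that is not the sum of two nonzero elements. -/
def IsAtomS (r a : ℚ) : Prop :=
  a ∈ S r ∧ a ≠ 0 ∧ ¬ ∃ y z : ℚ, y ∈ S r ∧ z ∈ S r ∧ y ≠ 0 ∧ z ≠ 0 ∧ a = y + z

/-- The set of lengths of `x` as sums of atoms of `S_r`. -/
def atomLengthSet (r x : ℚ) : Set ℕ :=
  {t | ∃ f : Fin t → ℚ, (∀ i, IsAtomS r (f i)) ∧ ∑ i, f i = x}

/-- The union of the sets of lengths (over atoms) of elements of `S_r` containing `k`. -/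
def Uk (r : ℚ) (k : ℕ) : Set ℕ :=
  {l | ∃ x ∈ S r, x ≠ 0 ∧ k ∈ atomLengthSet r x ∧ l ∈ atomLengthSet r x}

namespace SRnsp

def val (r : ℚ) (α : ℕ →₀ ℕ) : ℚ := α.sum fun i c => (c : ℚ) * r ^ i

lemma isFactorization_iff (r x : ℚ) (α : ℕ →₀ ℕ) : IsFactorization r x α ↔ val r α = x :=
  Iff.rfl

@[simp] lemma val_zero (r : ℚ) : val r 0 = 0 := Finsupp.sum_zero_index

@[simp] lemma val_single (r : ℚ) (i c : ℕ) : val r (single i c) = (c:ℚ) * r ^ i := by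
  unfold val
  rw [Finsupp.sum_single_index]
  simp

lemma val_add (r : ℚ) (α β : ℕ →₀ ℕ) : val r (α + β) = val r α + val r β := by
  unfold val
  rw [Finsupp.sum_add_index]
  · intro i _; simp
  · intro i _ c d; push_cast; ring

@[simp] lemma flen_zero : flen 0 = 0 := Finsupp.sum_zero_index

@[simp] lemma flen_single (i c : ℕ) : flen (single i c) = c := by
  unfold flen
  rw [Finsupp.sum_single_index]; rfl

lemma flen_add (α β : ℕ →₀ ℕ) : flen (α + β) = flen α + flen β := by
  unfold flen
  rw [Finsupp.sum_add_index] <;> simp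

lemma coeff_le_flen (α : ℕ →₀ ℕ) (i : ℕ) : α i ≤ flen α := by
  by_cases h : i ∈ α.support
  · exact Finset.single_le_sum (f := fun j => α j) (fun _ _ => Nat.zero_le _) h
  · simp [Finsupp.notMem_support_iff.mp h]

lemma flen_eq_zero {α : ℕ →₀ ℕ} (h : flen α = 0) : α = 0 := by
  ext i
  have := coeff_le_flen α i
  simp only [Finsupp.coe_zero, Pi.zero_apply]
  omega

lemma val_pos {r : ℚ} (hr : 0 < r) {α : ℕ →₀ ℕ} (hα : α ≠ 0) : 0 < val r α := by
  obtain ⟨i, hi⟩ : ∃ i, i ∈ α.support := by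
    by_contra h
    push_neg at h
    exact hα (Finsupp.support_eq_empty.mp (Finset.eq_empty_of_forall_notMem h))
  apply Finset.sum_pos'
  · intro j _; positivity
  · refine ⟨i, hi, ?_⟩
    have h2 : 0 < α i := Nat.pos_of_ne_zero (Finsupp.mem_support_iff.mp hi)
    have h3 : (0:ℚ) < α i := by exact_mod_cast h2
    positivity

lemma val_ne_zero {r : ℚ} (hr : 0 < r) {α : ℕ →₀ ℕ} (hα : α ≠ 0) : val r α ≠ 0 :=
  ne_of_gt (val_pos hr hα)

lemma val_eq_range_sum (r : ℚ) (α : ℕ →₀ ℕ) (N : ℕ) (h : ∀ i, i ∈ α.support → i < N) :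
    val r α = ∑ i ∈ Finset.range N, (α i : ℚ) * r ^ i := by
  unfold val Finsupp.sum
  apply Finset.sum_subset
  · intro i hi; exact Finset.mem_range.mpr (h i hi)
  · intro i _ hi; simp [Finsupp.notMem_support_iff.mp hi]

def ival (p q N : ℕ) (a : ℕ → ℕ) : ℕ := ∑ i ∈ Finset.range N, a i * p ^ i * q ^ (N - 1 - i)

lemma ival_succ (p q N : ℕ) (a : ℕ → ℕ) :
    ival p q (N+1) a = a 0 * q ^ N + p * ival p q N (fun j => a (j+1)) := by
  unfold ival
  rw [Finset.sum_range_succ', Finset.mul_sum]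
  have h1 : ∀ i ∈ Finset.range N,
      a (i+1) * p^(i+1) * q^(N+1-1-(i+1)) = p * (a (i+1) * p^i * q^(N-1-i)) := by
    intro i hi
    have hi' := Finset.mem_range.mp hi
    have he : N+1-1-(i+1) = N-1-i := by omega
    rw [he]; ring
  rw [Finset.sum_congr rfl h1]
  have he2 : N+1-1-0 = N := by omega
  rw [he2]
  ring

lemma ival_unique (p q : ℕ) (hp : 1 < p) (hcop : Nat.Coprime p q) :
    ∀ N (a b : ℕ → ℕ), (∀ i, a i < p) → (∀ i, b i < p) →
      ival p q N a = ival p q N b → ∀ i < N, a i = b i := by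
  intro N
  induction N with
  | zero => intro a b _ _ _ i hi; omega
  | succ N ih =>
    intro a b ha hb heq i hi
    rw [ival_succ, ival_succ] at heq
    have key : ∀ c : ℕ → ℕ,
        c 0 * q ^ N ≡ c 0 * q ^ N + p * ival p q N (fun j => c (j+1)) [MOD p] := by
      intro c
      have h0 : (0:ℕ) ≡ p * ival p q N (fun j => c (j+1)) [MOD p] :=
        ((Nat.modEq_zero_iff_dvd).mpr ⟨_, rfl⟩).symm
      simpa using (Nat.ModEq.add_left (c 0 * q ^ N) h0)
    have hmod : a 0 * q ^ N ≡ b 0 * q ^ N [MOD p] :=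
      ((key a).trans (heq ▸ (key b).symm))
    have h0 : a 0 = b 0 := by
      have hcq : Nat.Coprime p (q ^ N) := hcop.pow_right N
      have h2 := Nat.ModEq.cancel_right_of_coprime hcq hmod
      rwa [Nat.ModEq, Nat.mod_eq_of_lt (ha 0), Nat.mod_eq_of_lt (hb 0)] at h2
    have htail : ival p q N (fun j => a (j+1)) = ival p q N (fun j => b (j+1)) := by
      rw [h0] at heq
      exact Nat.eq_of_mul_eq_mul_left (by omega) (Nat.add_left_cancel heq)
    rcases Nat.eq_zero_or_pos i with h | h
    · rw [h]; exact h0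
    · obtain ⟨j, rfl⟩ : ∃ j, i = j + 1 := ⟨i - 1, by omega⟩
      exact ih _ _ (fun t => ha _) (fun t => hb _) htail j (by omega)

section
variable (r : ℚ)

lemma num_pos (h1 : 1 < r) : (0:ℤ) < r.num := by
  have : (0:ℚ) < r := lt_trans zero_lt_one h1
  exact Rat.num_pos.mpr this

lemma p_cast (h1 : 1 < r) : ((r.num.toNat : ℚ)) = (r.den : ℚ) * r := by
  have h := Rat.mul_den_eq_num r
  have : ((r.num.toNat : ℤ) : ℚ) = (r.num : ℚ) := by
    rw [Int.toNat_of_nonneg (le_of_lt (num_pos r h1))]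
  push_cast at this ⊢
  rw [this, ← h]; ring

lemma den_lt_num (h1 : 1 < r) : r.den < r.num.toNat := by
  have h : (r.den : ℚ) < r.num := by
    have hden : (0:ℚ) < r.den := by exact_mod_cast r.pos
    calc (r.den:ℚ) = 1 * r.den := by ring
    _ < r * r.den := by exact mul_lt_mul_of_pos_right h1 hden
    _ = r.num := Rat.mul_den_eq_num r
  have : (r.den : ℤ) < r.num := by exact_mod_cast h
  omega

lemma cop (h1 : 1 < r) : Nat.Coprime r.num.toNat r.den := by
  have h2 := r.reduced
  have h4 := num_pos r h1
  have h3 : r.num.natAbs = r.num.toNat := by omega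
  rwa [h3] at h2

lemma ival_cast (h1 : 1 < r) (α : ℕ →₀ ℕ) (N : ℕ) (h : ∀ i, i ∈ α.support → i < N) :
    ((ival r.num.toNat r.den N α : ℚ)) = val r α * (r.den : ℚ) ^ (N - 1) := by
  rw [val_eq_range_sum r α N h]
  unfold ival
  push_cast
  rw [Finset.sum_mul]
  apply Finset.sum_congr rfl
  intro i hi
  have hi' := Finset.mem_range.mp hi
  have hpc : ((r.num.toNat : ℚ)) ^ i = (r.den : ℚ)^i * r^i := by
    rw [p_cast r h1, mul_pow]
  rw [hpc]
  have hqq : (r.den : ℚ)^i * (r.den : ℚ)^(N-1-i) = (r.den:ℚ)^(N-1) := by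
    rw [← pow_add]; congr 1; omega
  calc (α i : ℚ) * ((r.den:ℚ)^i * r^i) * (r.den:ℚ)^(N-1-i)
      = (α i : ℚ) * r^i * ((r.den:ℚ)^i * (r.den:ℚ)^(N-1-i)) := by ring
    _ = (α i : ℚ) * r^i * (r.den:ℚ)^(N-1) := by rw [hqq]

/-- uniqueness of reduced factorizations -/
lemma reduced_unique (h1 : 1 < r) (hd : r.den ≠ 1) {α β : ℕ →₀ ℕ}
    (hα : ∀ i, α i < r.num.toNat) (hβ : ∀ i, β i < r.num.toNat)
    (h : val r α = val r β) : α = β := by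
  set p := r.num.toNat with hpdef
  set q := r.den with hqdef
  set N := ((α.support ∪ β.support).sup id) + 1 with hN
  have hsup : ∀ (γ : ℕ →₀ ℕ), γ = α ∨ γ = β → ∀ i, i ∈ γ.support → i < N := by
    rintro γ hγ i hi
    have : i ≤ (α.support ∪ β.support).sup id := by
      apply Finset.le_sup (f := id)
      rcases hγ with rfl | rfl
      · exact Finset.mem_union_left _ hi
      · exact Finset.mem_union_right _ hi
    omega
  have hc1 := ival_cast r h1 α N (hsup α (Or.inl rfl))
  have hc2 := ival_cast r h1 β N (hsup β (Or.inr rfl))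
  have hival : ival p q N α = ival p q N β := by
    have : ((ival p q N α : ℚ)) = ((ival p q N β : ℚ)) := by rw [hc1, hc2, h]
    exact_mod_cast this
  have hp1 : 1 < p := by
    have := den_lt_num r h1
    have := r.pos
    omega
  have huniq := ival_unique p q hp1 (cop r h1) N α β hα hβ hival
  ext i
  by_cases hi : i < N
  · exact huniq i hi
  · have hα0 : α i = 0 := by
      by_contra hne
      exact hi (hsup α (Or.inl rfl) i (Finsupp.mem_support_iff.mpr hne))
    have hβ0 : β i = 0 := by
      by_contra hne
      exact hi (hsup β (Or.inr rfl) i (Finsupp.mem_support_iff.mpr hne))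
    rw [hα0, hβ0]

end
section
variable (r : ℚ)

lemma qr_pow (h1 : 1 < r) (i : ℕ) :
    (r.den : ℚ) * r ^ (i+1) = (r.num.toNat : ℚ) * r ^ i := by
  rw [p_cast r h1]; ring

lemma split_at (β : ℕ →₀ ℕ) (i : ℕ) :
    val r β = (β i : ℚ) * r ^ i + val r (β.erase i)
    ∧ flen β = β i + flen (β.erase i) := by
  have h := Finsupp.single_add_erase i β
  constructor
  · conv_lhs => rw [← h]
    rw [val_add, val_single]
  · conv_lhs => rw [← h]
    rw [flen_add, flen_single]

/-- one up-move -/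
lemma up_move (h1 : 1 < r) {β : ℕ →₀ ℕ} {i : ℕ} (hi : r.num.toNat ≤ β i) :
    ∃ δ : ℕ →₀ ℕ, val r δ = val r β ∧
      flen β = flen δ + (r.num.toNat - r.den) ∧
      r.den ≤ δ (i+1) ∧ flen δ < flen β := by
  set p := r.num.toNat with hp
  set q := r.den with hq
  have hqp : q < p := den_lt_num r h1
  have hq0 : 0 < q := r.pos
  set δ : ℕ →₀ ℕ := β.erase i + single i (β i - p) + single (i+1) q with hδ
  have hval : val r δ = val r β := by
    rw [hδ, val_add, val_add, val_single, val_single]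
    rw [(split_at r β i).1]
    have hcast : ((β i - p : ℕ) : ℚ) = (β i : ℚ) - p := by
      push_cast [Nat.cast_sub hi]; ring
    rw [hcast]
    have key : (q:ℚ) * r ^ (i+1) = (p:ℚ) * r ^ i := by rw [hq, hp]; exact qr_pow r h1 i
    linear_combination key
  have hflen : flen δ = flen (β.erase i) + (β i - p) + q := by
    rw [hδ, flen_add, flen_add, flen_single, flen_single]
  have hsplit := (split_at r β i).2
  refine ⟨δ, hval, by omega, ?_, by omega⟩
  rw [hδ]
  simp only [Finsupp.add_apply, Finsupp.single_apply]
  simp [Finsupp.erase_ne (Nat.succ_ne_self i).symm]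

/-- every factorization reduces to a reduced one -/
lemma exists_reduced (h1 : 1 < r) (β : ℕ →₀ ℕ) :
    ∃ γ : ℕ →₀ ℕ, (∀ i, γ i < r.num.toNat) ∧ val r γ = val r β := by
  generalize hn : flen β = n
  induction n using Nat.strong_induction_on generalizing β with
  | _ n ih =>
    by_cases hred : ∀ i, β i < r.num.toNat
    · exact ⟨β, hred, rfl⟩
    · push_neg at hred
      obtain ⟨i, hi⟩ := hred
      obtain ⟨δ, hval, hlen, _, hlt⟩ := up_move r h1 hi
      obtain ⟨γ, hγ1, hγ2⟩ := ih (flen δ) (hn ▸ hlt) δ rfl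
      exact ⟨γ, hγ1, hγ2.trans hval⟩

/-- MAIN: structure of all factorizations relative to the reduced one -/
lemma main_lemma (h1 : 1 < r) (hd : r.den ≠ 1) (β γ : ℕ →₀ ℕ)
    (hγ : ∀ i, γ i < r.num.toNat) (hv : val r β = val r γ) :
    ∃ t : ℕ, flen β = flen γ + t * (r.num.toNat - r.den) ∧
      (t = 0 → β = γ) ∧ (1 ≤ t → ∃ j, r.den ≤ γ (j+1)) := by
  generalize hn : flen β = n
  induction n using Nat.strong_induction_on generalizing β with
  | _ n ih =>
    by_cases hred : ∀ i, β i < r.num.toNat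
    · have : β = γ := reduced_unique r h1 hd hred hγ hv
      exact ⟨0, by simp [this, ← hn], fun _ => this, fun h => absurd h (by omega)⟩
    · push_neg at hred
      obtain ⟨i, hi⟩ := hred
      obtain ⟨δ, hval, hlen, hcoef, hlt⟩ := up_move r h1 hi
      obtain ⟨t', ht1, ht2, ht3⟩ := ih (flen δ) (hn ▸ hlt) δ (hval.trans hv) rfl
      refine ⟨t' + 1, ?_, by omega, ?_⟩
      · have hmul : (t' + 1) * (r.num.toNat - r.den)
            = t' * (r.num.toNat - r.den) + (r.num.toNat - r.den) := by ring
        rw [hmul]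
        generalize t' * (r.num.toNat - r.den) = A at ht1 ⊢
        omega
      · intro _
        rcases Nat.eq_zero_or_pos t' with h0 | h0
        · exact ⟨i, (ht2 h0) ▸ hcoef⟩
        · exact ht3 h0

end
section
variable (r : ℚ)

lemma pow_mem_S (n : ℕ) : r ^ n ∈ S r :=
  AddSubmonoid.subset_closure ⟨n, rfl⟩

lemma val_mem_S (α : ℕ →₀ ℕ) : val r α ∈ S r := by
  induction α using Finsupp.induction with
  | zero => simp only [val_zero]; exact (S r).zero_mem
  | single_add a b f _ _ ih =>
    rw [val_add, val_single]
    apply (S r).add_mem _ ih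
    have : (b:ℚ) * r ^ a = b • (r ^ a) := by simp [nsmul_eq_mul]
    rw [this]
    exact AddSubmonoid.nsmul_mem _ (pow_mem_S r a) b

lemma mem_S_iff (x : ℚ) : x ∈ S r ↔ ∃ α : ℕ →₀ ℕ, val r α = x := by
  constructor
  · intro hx
    induction hx using AddSubmonoid.closure_induction with
    | mem y hy => obtain ⟨n, rfl⟩ := hy; exact ⟨single n 1, by simp⟩
    | zero => exact ⟨0, val_zero r⟩
    | add y z _ _ hy hz =>
      obtain ⟨α, hα⟩ := hy; obtain ⟨β, hβ⟩ := hz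
      exact ⟨α + β, by rw [val_add, hα, hβ]⟩
  · rintro ⟨α, rfl⟩; exact val_mem_S r α

lemma flen_pos {α : ℕ →₀ ℕ} (h : α ≠ 0) : 1 ≤ flen α := by
  rcases Nat.eq_zero_or_pos (flen α) with h0 | h0
  · exact absurd (flen_eq_zero h0) h
  · exact h0

lemma flen_one {α : ℕ →₀ ℕ} (h : flen α = 1) : ∃ i, α = single i 1 := by
  have hne : α ≠ 0 := by intro h0; rw [h0] at h; simp at h
  obtain ⟨i, hi⟩ : ∃ i, i ∈ α.support := by
    by_contra hc
    push_neg at hc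
    exact hne (Finsupp.support_eq_empty.mp (Finset.eq_empty_of_forall_notMem hc))
  have hsplit := Finsupp.single_add_erase i α
  have hflen : flen α = α i + flen (α.erase i) := by
    conv_lhs => rw [← hsplit]
    rw [flen_add, flen_single]
  have hαi : 1 ≤ α i := Nat.pos_of_ne_zero (Finsupp.mem_support_iff.mp hi)
  have h1 : α i = 1 := by omega
  have h2 : α.erase i = 0 := flen_eq_zero (by omega)
  refine ⟨i, ?_⟩
  rw [← hsplit, h2, h1, add_zero]

lemma pow_is_atom (h1 : 1 < r) (hd : r.den ≠ 1) (n : ℕ) : IsAtomS r (r ^ n) := by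
  have hr0 : (0:ℚ) < r := lt_trans zero_lt_one h1
  refine ⟨pow_mem_S r n, by positivity, ?_⟩
  rintro ⟨y, z, hy, hz, hy0, hz0, heq⟩
  obtain ⟨α, hα⟩ := (mem_S_iff r y).mp hy
  obtain ⟨β, hβ⟩ := (mem_S_iff r z).mp hz
  have hαne : α ≠ 0 := by rintro rfl; exact hy0 (hα.symm ▸ (val_zero r).symm ▸ rfl)
  have hβne : β ≠ 0 := by rintro rfl; exact hz0 (hβ.symm ▸ (val_zero r).symm ▸ rfl)
  have hγ : ∀ i, (single n 1 : ℕ →₀ ℕ) i < r.num.toNat := by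
    intro i
    have hp : 1 < r.num.toNat := by
      have := den_lt_num r h1; have := r.pos; omega
    have : (single n 1 : ℕ →₀ ℕ) i ≤ 1 := by
      rw [Finsupp.single_apply]; split <;> omega
    omega
  have hv : val r (α + β) = val r (single n 1) := by
    rw [val_add, hα, hβ, val_single, ← heq]; push_cast; ring
  obtain ⟨t, ht1, ht2, ht3⟩ := main_lemma r h1 hd (α + β) (single n 1) hγ hv
  have hq2 : 2 ≤ r.den := by have := r.pos; omega
  have ht0 : t = 0 := by
    by_contra hne
    obtain ⟨j, hj⟩ := ht3 (by omega)
    have : (single n 1 : ℕ →₀ ℕ) (j+1) ≤ 1 := by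
      rw [Finsupp.single_apply]; split <;> omega
    omega
  have := ht2 ht0
  have hflen : flen (α + β) = 1 := by rw [this, flen_single]
  rw [flen_add] at hflen
  have := flen_pos hαne
  have := flen_pos hβne
  omega

lemma atom_iff (h1 : 1 < r) (hd : r.den ≠ 1) (a : ℚ) :
    IsAtomS r a ↔ ∃ n : ℕ, a = r ^ n := by
  have hr0 : (0:ℚ) < r := lt_trans zero_lt_one h1
  constructor
  · rintro ⟨ha, ha0, hna⟩
    obtain ⟨α, hα⟩ := (mem_S_iff r a).mp ha
    have hαne : α ≠ 0 := by rintro rfl; exact ha0 (hα ▸ (val_zero r) ▸ rfl)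
    have h1f : flen α = 1 := by
      by_contra hne
      have h2 : 2 ≤ flen α := by have := flen_pos hαne; omega
      obtain ⟨i, hi⟩ : ∃ i, i ∈ α.support := by
        by_contra hc; push_neg at hc
        exact hαne (Finsupp.support_eq_empty.mp (Finset.eq_empty_of_forall_notMem hc))
      have hαi : 1 ≤ α i := Nat.pos_of_ne_zero (Finsupp.mem_support_iff.mp hi)
      set δ : ℕ →₀ ℕ := α.erase i + single i (α i - 1) with hδ
      have hv : val r α = r ^ i + val r δ := by
        rw [hδ, val_add, val_single, (split_at r α i).1]
        have : ((α i - 1 : ℕ) : ℚ) = (α i : ℚ) - 1 := by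
          push_cast [Nat.cast_sub hαi]; ring
        rw [this]; ring
      have hδne : δ ≠ 0 := by
        intro h0
        have : flen δ = 0 := by rw [h0]; simp
        rw [hδ, flen_add, flen_single] at this
        have h3 := (split_at r α i).2
        omega
      exact hna ⟨r ^ i, val r δ, pow_mem_S r i, val_mem_S r δ, by positivity,
        val_ne_zero hr0 hδne, by rw [← hα, hv]⟩
    obtain ⟨n, hn⟩ := flen_one h1f
    exact ⟨n, by rw [← hα, hn, val_single]; push_cast; ring⟩
  · rintro ⟨n, rfl⟩; exact pow_is_atom r h1 hd n

end
section
variable (r : ℚ)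

lemma val_sum {ι : Type*} (s : Finset ι) (h : ι → ℕ →₀ ℕ) :
    val r (∑ i ∈ s, h i) = ∑ i ∈ s, val r (h i) := by
  classical
  induction s using Finset.induction_on with
  | empty => simp
  | insert a s' hx ih =>
                    rw [Finset.sum_insert hx, Finset.sum_insert hx, val_add, ih]

lemma flen_sum {ι : Type*} (s : Finset ι) (h : ι → ℕ →₀ ℕ) :
    flen (∑ i ∈ s, h i) = ∑ i ∈ s, flen (h i) := by
  classical
  induction s using Finset.induction_on with
  | empty => simp
  | insert a s' hx ih =>
                    rw [Finset.sum_insert hx, Finset.sum_insert hx, flen_add, ih]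

lemma toMultiset_map_sum (α : ℕ →₀ ℕ) :
    ((α.toMultiset).map fun i => r ^ i).sum = val r α := by
  induction α using Finsupp.induction with
  | zero => simp
  | single_add a b f _ _ ih =>
    rw [Finsupp.toMultiset_add, Multiset.map_add, Multiset.sum_add, ih,
      Finsupp.toMultiset_single, val_add, val_single]
    congr 1
    simp [Multiset.nsmul_singleton, Multiset.map_replicate, Multiset.sum_replicate,
      nsmul_eq_mul, mul_comm]

lemma card_toMultiset' (α : ℕ →₀ ℕ) : Multiset.card α.toMultiset = flen α := by
  rw [Finsupp.card_toMultiset]; rfl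

lemma atomLengthSet_eq (h1 : 1 < r) (hd : r.den ≠ 1) (x : ℚ) :
    atomLengthSet r x = {t | ∃ α : ℕ →₀ ℕ, val r α = x ∧ flen α = t} := by
  ext t
  simp only [atomLengthSet, Set.mem_setOf_eq]
  constructor
  · rintro ⟨f, hf, hsum⟩
    choose g hg using fun i => (atom_iff r h1 hd (f i)).mp (hf i)
    refine ⟨∑ i : Fin t, single (g i) 1, ?_, ?_⟩
    · rw [val_sum]
      rw [← hsum]
      apply Finset.sum_congr rfl
      intro i _
      rw [val_single, hg i]; push_cast; ring
    · rw [flen_sum]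
      simp
  · rintro ⟨α, hval, hlen⟩
    set m : Multiset ℚ := α.toMultiset.map fun i => r ^ i with hm
    have hcard : Multiset.card m = t := by
      rw [hm, Multiset.card_map, card_toMultiset', hlen]
    have hsum : m.sum = x := by rw [hm, toMultiset_map_sum, hval]
    have hatom : ∀ a ∈ m, IsAtomS r a := by
      intro a ha
      rw [hm] at ha
      obtain ⟨i, _, rfl⟩ := Multiset.mem_map.mp ha
      exact pow_is_atom r h1 hd i
    set l := m.toList with hl
    have hlen' : l.length = t := by rw [hl, Multiset.length_toList, hcard]
    refine ⟨fun i => l.get (Fin.cast hlen'.symm i), ?_, ?_⟩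
    · intro i
      apply hatom
      apply Multiset.mem_toList.mp
      show l.get _ ∈ l
      exact l.get_mem _
    · have he : ∑ i : Fin t, l.get (Fin.cast hlen'.symm i) = ∑ i : Fin l.length, l.get i :=
        Fintype.sum_equiv (finCongr hlen'.symm) _ _ (fun i => rfl)
      have h4 : (∑ i : Fin l.length, l.get i) = l.sum := Fin.sum_univ_getElem l
      rw [he, h4]
      show m.toList.sum = x
      rw [Multiset.sum_toList]
      exact hsum
  
end
section
variable (r : ℚ)

lemma constructG (h1 : 1 < r) (j : ℕ) :
    ∃ β : ℕ →₀ ℕ, val r β = (r.den : ℚ) * r ^ j ∧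
      flen β = r.den + j * (r.num.toNat - r.den) := by
  induction j with
  | zero => exact ⟨single 0 r.den, by simp, by simp⟩
  | succ j ih =>
    obtain ⟨β, hv, hl⟩ := ih
    have hqp := den_lt_num r h1
    refine ⟨β + single j (r.num.toNat - r.den), ?_, ?_⟩
    · rw [val_add, hv, val_single]
      have hc : ((r.num.toNat - r.den : ℕ) : ℚ) = (r.num.toNat:ℚ) - r.den := by
        push_cast [Nat.cast_sub (le_of_lt hqp)]; ring
      rw [hc]
      linear_combination (qr_pow r h1 j).symm
    · rw [flen_add, hl, flen_single, Nat.succ_mul]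
      generalize j * (r.num.toNat - r.den) = A
      omega

lemma construct (h1 : 1 < r) (c j : ℕ) (hc : r.den ≤ c) :
    ∃ β : ℕ →₀ ℕ, val r β = (c:ℚ) * r ^ j ∧
      flen β = c + j * (r.num.toNat - r.den) := by
  obtain ⟨β, hv, hl⟩ := constructG r h1 j
  refine ⟨β + single j (c - r.den), ?_, ?_⟩
  · rw [val_add, hv, val_single]
    have hcc : ((c - r.den : ℕ) : ℚ) = (c:ℚ) - r.den := by
      push_cast [Nat.cast_sub hc]; ring
    rw [hcc]; ring
  · rw [flen_add, hl, flen_single]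
    generalize j * (r.num.toNat - r.den) = A
    omega

lemma mem_Uk_iff (h1 : 1 < r) (hd : r.den ≠ 1) (k : ℕ) (hk : 0 < k) (l : ℕ) :
    l ∈ Uk r k ↔ ∃ α β : ℕ →₀ ℕ, val r α = val r β ∧ flen α = k ∧ flen β = l := by
  have hr0 : (0:ℚ) < r := lt_trans zero_lt_one h1
  constructor
  · rintro ⟨x, hxS, hx0, hkx, hlx⟩
    rw [atomLengthSet_eq r h1 hd] at hkx hlx
    obtain ⟨α, hα1, hα2⟩ := hkx
    obtain ⟨β, hβ1, hβ2⟩ := hlx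
    exact ⟨α, β, hα1.trans hβ1.symm, hα2, hβ2⟩
  · rintro ⟨α, β, hv, hα, hβ⟩
    refine ⟨val r α, val_mem_S r α, ?_, ?_, ?_⟩
    · apply val_ne_zero hr0
      intro h0
      rw [h0] at hα
      simp at hα
      omega
    · rw [atomLengthSet_eq r h1 hd]; exact ⟨α, rfl, hα⟩
    · rw [atomLengthSet_eq r h1 hd]; exact ⟨β, hv.symm, hβ⟩

end
end SRnsp

open SRnsp

theorem stmt11 (r : ℚ) (h1 : 1 < r) (hd : r.den ≠ 1) (k : ℕ) (hk : 0 < k) :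
    (k < r.den → Uk r k = {k}) ∧
    (r.den ≤ k → k < r.num.toNat →
      Uk r k = {l : ℕ | ∃ j : ℕ, l = k + j * (r.num.toNat - r.den)}) ∧
    (r.num.toNat ≤ k → ∃ L : ℤ, L < 0 ∧
      Uk r k = {m : ℕ | ∃ j : ℤ, L ≤ j ∧ (m : ℤ) = k + j * (r.num - (r.den : ℤ))}) := by
  have hqp : r.den < r.num.toNat := den_lt_num r h1
  have hq0 : 0 < r.den := r.pos
  have hq1 : 1 < r.den := by rcases Nat.lt_or_ge 1 r.den with h | h; exact h; omega
  have hnum : r.num = (r.num.toNat : ℤ) := (Int.toNat_of_nonneg (le_of_lt (num_pos r h1))).symm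
  refine ⟨?_, ?_, ?_⟩
  -- Part (i)
  · intro hkq
    ext l
    simp only [Set.mem_singleton_iff]
    rw [mem_Uk_iff r h1 hd k hk l]
    constructor
    · rintro ⟨α, β, hv, hα, hβ⟩
      have hred : ∀ i, α i < r.num.toNat := by
        intro i
        have := coeff_le_flen α i
        omega
      obtain ⟨t, ht1, ht2, ht3⟩ := main_lemma r h1 hd β α hred hv.symm
      have ht0 : t = 0 := by
        by_contra h
        obtain ⟨j, hj⟩ := ht3 (by omega)
        have := coeff_le_flen α (j+1)
        omega
      rw [ht0] at ht1
      simp at ht1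
      omega
    · rintro rfl
      exact ⟨single 0 _, single 0 _, rfl, flen_single _ _, flen_single _ _⟩
  -- Part (ii)
  · intro hqk hkp
    ext l
    rw [mem_Uk_iff r h1 hd k hk l]
    simp only [Set.mem_setOf_eq]
    constructor
    · rintro ⟨α, β, hv, hα, hβ⟩
      obtain ⟨γ, hγred, hγv⟩ := exists_reduced r h1 α
      obtain ⟨s, hs1, hs2, hs3⟩ := main_lemma r h1 hd α γ hγred hγv.symm
      have hs0 : s = 0 := by
        by_contra h
        obtain ⟨j, hj⟩ := hs3 (by omega)
        have h5 : r.den ≤ flen γ := le_trans hj (coeff_le_flen γ (j+1))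
        have h6 : 1 * (r.num.toNat - r.den) ≤ s * (r.num.toNat - r.den) :=
          Nat.mul_le_mul_right _ (by omega)
        omega
      rw [hs0] at hs1
      simp at hs1
      obtain ⟨t, ht1, _, _⟩ := main_lemma r h1 hd β γ hγred (hv.symm.trans hγv.symm)
      exact ⟨t, by omega⟩
    · rintro ⟨j, rfl⟩
      obtain ⟨β, hv, hl⟩ := construct r h1 k j hqk
      exact ⟨single j k, β, by rw [val_single, hv], flen_single j k, hl⟩
  -- Part (iii)
  · intro hpk
    have hD0 : 0 < r.num.toNat - r.den := by omega
    have hdm := Nat.div_add_mod (k - r.den) (r.num.toNat - r.den)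
    have hmr : (k - r.den) % (r.num.toNat - r.den) < r.num.toNat - r.den :=
      Nat.mod_lt _ hD0
    have hs₀1 : 1 ≤ (k - r.den) / (r.num.toNat - r.den) := by
      rw [Nat.one_le_div_iff hD0]; omega
    refine ⟨-(((k - r.den) / (r.num.toNat - r.den) : ℕ) : ℤ), by omega, ?_⟩
    ext m
    rw [mem_Uk_iff r h1 hd k hk m]
    simp only [Set.mem_setOf_eq]
    have hδ : r.num - (r.den:ℤ) = ((r.num.toNat - r.den : ℕ) : ℤ) := by omega
    rw [hδ]
    constructor
    · rintro ⟨α, β, hv, hα, hβ⟩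
      obtain ⟨γ, hγred, hγv⟩ := exists_reduced r h1 α
      obtain ⟨s, hs1, hs2, hs3⟩ := main_lemma r h1 hd α γ hγred hγv.symm
      obtain ⟨t, ht1, _, _⟩ := main_lemma r h1 hd β γ hγred (hv.symm.trans hγv.symm)
      refine ⟨(t:ℤ) - s, ?_, ?_⟩
      · rcases Nat.eq_zero_or_pos s with h0 | h0
        · omega
        · obtain ⟨i, hi⟩ := hs3 h0
          have hγq : r.den ≤ flen γ := le_trans hi (coeff_le_flen γ (i+1))
          have hC : (t + (k - r.den) / (r.num.toNat - r.den) + 1) * (r.num.toNat - r.den)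
              = t * (r.num.toNat - r.den)
                + ((k - r.den) / (r.num.toNat - r.den)) * (r.num.toNat - r.den)
                + (r.num.toNat - r.den) := by ring
          have hE : (r.num.toNat - r.den) * ((k - r.den) / (r.num.toNat - r.den))
              = ((k - r.den) / (r.num.toNat - r.den)) * (r.num.toNat - r.den) := by ring
          by_contra hcon
          push_neg at hcon
          have hs' : t + (k - r.den) / (r.num.toNat - r.den) + 1 ≤ s := by omega
          have hst : (t + (k - r.den) / (r.num.toNat - r.den) + 1) * (r.num.toNat - r.den)
              ≤ s * (r.num.toNat - r.den) := Nat.mul_le_mul_right _ hs'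
          clear hv hγv hγred hs2 hs3 hδ hnum hi hs' hcon h0
          omega
      · have hexp : ((t:ℤ) - s) * ((r.num.toNat - r.den : ℕ) : ℤ)
            = ((t * (r.num.toNat - r.den) : ℕ) : ℤ)
              - ((s * (r.num.toNat - r.den) : ℕ) : ℤ) := by
          push_cast
          ring
        rw [hexp]
        clear hexp hv hγv hγred hs2 hs3 hδ hnum
        omega
    · rintro ⟨j, hj1, hj2⟩
      rcases le_or_gt 0 j with hj0 | hj0
      · lift j to ℕ using hj0
        have hm : m = k + j * (r.num.toNat - r.den) := by exact_mod_cast hj2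
        obtain ⟨β, hv, hl⟩ := construct r h1 k j (by omega)
        exact ⟨single j k, β, by rw [val_single, hv], flen_single j k, by omega⟩
      · have huZ : (((-j).toNat : ℕ) : ℤ) = -j := Int.toNat_of_nonneg (by omega)
        have hexp : ((-j).toNat) * (r.num.toNat - r.den)
            = (((-j).toNat) * (r.num.toNat - r.den) : ℕ) := rfl
        have hmul : (((-j).toNat * (r.num.toNat - r.den) : ℕ) : ℤ)
            ≤ (((k - r.den) / (r.num.toNat - r.den) * (r.num.toNat - r.den) : ℕ) : ℤ) := by
          have : ((-j).toNat : ℕ) ≤ (k - r.den) / (r.num.toNat - r.den) := by omega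
          exact_mod_cast Nat.mul_le_mul_right _ this
        have hE : (r.num.toNat - r.den) * ((k - r.den) / (r.num.toNat - r.den))
            = ((k - r.den) / (r.num.toNat - r.den)) * (r.num.toNat - r.den) := by ring
        have hjm : (j:ℤ) * ((r.num.toNat - r.den : ℕ):ℤ)
            = -(((-j).toNat * (r.num.toNat - r.den) : ℕ) : ℤ) := by
          push_cast
          rw [show ((-j).toNat : ℤ) = -j by omega]
          ring
        have hqm : r.den ≤ m := by omega
        have hmk : m + (-j).toNat * (r.num.toNat - r.den) = k := by omega
        obtain ⟨β, hv, hl⟩ := construct r h1 m ((-j).toNat) hqm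
        exact ⟨β, single ((-j).toNat) m, by rw [val_single, hv], by omega,
          flen_single _ m⟩
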